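/- Let pE and pPI be full-support pmfs on X × Y × S such that: (i) they share the generating mechanism, i.e. pE(x|y,s) = pPI(x|y,s) for all x, y, s; (ii) under pPI, Y and S are independent, i.e. pPI(y,s) = pPI(y) · pPI(s) for all y, s; (iii) under pPI, Y and S are conditionally independent given X, i.e. pPI(x,y,s)/pPI(x) = pPI(y|x) · pPI(s|x) for all x, y, s. Then −∑_{x,y} pE(x,y) · Real.log (pPI(y|x)) ≤ −∑_y pE(y) · Real.log (pPI(y)); that is, in every environment sharing the mechanism, the classifier obtained from the post-intervention distribution performs at least as well (in cross-entropy risk) as predicting with the pPI prior alone. -/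

import Mathlib

open Finset

private lemma sum_rot_aux {X Y S : Type*} [Fintype X] [Fintype Y] [Fintype S]
    (f : X → Y → S → ℝ) :
    ∑ x, ∑ y, ∑ s, f x y s = ∑ y, ∑ s, ∑ x, f x y s :=
  calc ∑ x, ∑ y, ∑ s, f x y s = ∑ y, ∑ x, ∑ s, f x y s := Finset.sum_comm
    _ = ∑ y, ∑ s, ∑ x, f x y s := Finset.sum_congr rfl fun _ _ => Finset.sum_comm

/-- In every environment `pE` sharing the generating mechanism with a
post-intervention distribution `pPI` (under which `Y ⫫ S` and `Y ⫫ S ∣ X`),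
the classifier obtained from `pPI` performs at least as well, in cross-entropy
risk, as predicting with the `pPI` prior alone. -/
theorem crossEntropy_risk_pid_le_prior
    {X Y S : Type*} [Fintype X] [Fintype Y] [Fintype S]
    [Nonempty X] [Nonempty Y] [Nonempty S]
    (pE pPI : X → Y → S → ℝ)
    (hEpos : ∀ x y s, 0 < pE x y s) (hPIpos : ∀ x y s, 0 < pPI x y s)
    (hEsum : ∑ x, ∑ y, ∑ s, pE x y s = 1)
    (hPIsum : ∑ x, ∑ y, ∑ s, pPI x y s = 1)
    -- (i) shared generating mechanism: pE(x∣y,s) = pPI(x∣y,s)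
    (hmech : ∀ x y s,
      pE x y s / (∑ x', pE x' y s) = pPI x y s / (∑ x', pPI x' y s))
    -- (ii) under pPI, Y and S are independent: pPI(y,s) = pPI(y)·pPI(s)
    (hind : ∀ y s, (∑ x, pPI x y s) =
      (∑ x, ∑ s', pPI x y s') * (∑ x, ∑ y', pPI x y' s))
    -- (iii) under pPI, Y ⫫ S ∣ X: pPI(x,y,s)/pPI(x) = pPI(y∣x)·pPI(s∣x)
    (hcind : ∀ x y s,
      pPI x y s / (∑ y', ∑ s', pPI x y' s') =
        ((∑ s', pPI x y s') / (∑ y', ∑ s', pPI x y' s')) *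
          ((∑ y', pPI x y' s) / (∑ y', ∑ s', pPI x y' s'))) :
    -(∑ x, ∑ y, (∑ s, pE x y s) *
        Real.log ((∑ s, pPI x y s) / (∑ y', ∑ s, pPI x y' s))) ≤
      -(∑ y, (∑ x, ∑ s, pE x y s) * Real.log (∑ x, ∑ s, pPI x y s)) := by
  classical
  have hXne : (Finset.univ : Finset X).Nonempty := univ_nonempty
  have hYne : (Finset.univ : Finset Y).Nonempty := univ_nonempty
  have hSne : (Finset.univ : Finset S).Nonempty := univ_nonempty
  -- positivity of marginals
  have hPIxy : ∀ x y, (0:ℝ) < ∑ s, pPI x y s :=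
    fun x y => Finset.sum_pos (fun s _ => hPIpos x y s) hSne
  have hPIx : ∀ x, (0:ℝ) < ∑ y, ∑ s, pPI x y s :=
    fun x => Finset.sum_pos (fun y _ => hPIxy x y) hYne
  have hPIy : ∀ y, (0:ℝ) < ∑ x, ∑ s, pPI x y s :=
    fun y => Finset.sum_pos (fun x _ => hPIxy x y) hXne
  have hPIxs : ∀ x s, (0:ℝ) < ∑ y, pPI x y s :=
    fun x s => Finset.sum_pos (fun y _ => hPIpos x y s) hYne
  have hPIs : ∀ s, (0:ℝ) < ∑ x, ∑ y, pPI x y s :=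
    fun s => Finset.sum_pos (fun x _ => hPIxs x s) hXne
  have hPIys : ∀ y s, (0:ℝ) < ∑ x, pPI x y s :=
    fun y s => Finset.sum_pos (fun x _ => hPIpos x y s) hXne
  have hExy : ∀ x y, (0:ℝ) < ∑ s, pE x y s :=
    fun x y => Finset.sum_pos (fun s _ => hEpos x y s) hSne
  have hEys : ∀ y s, (0:ℝ) < ∑ x, pE x y s :=
    fun y s => Finset.sum_pos (fun x _ => hEpos x y s) hXne
  -- cross-multiplied versions of the hypotheses
  have hm : ∀ x y s, pE x y s * (∑ x', pPI x' y s) = pPI x y s * (∑ x', pE x' y s) :=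
    fun x y s => (div_eq_div_iff (hEys y s).ne' (hPIys y s).ne').mp (hmech x y s)
  have hc : ∀ x y s, pPI x y s * (∑ y', ∑ s', pPI x y' s')
      = (∑ s', pPI x y s') * (∑ y', pPI x y' s) := by
    intro x y s
    have h := hcind x y s
    have hA : (∑ y', ∑ s', pPI x y' s') ≠ 0 := (hPIx x).ne'
    field_simp at h
    have h' : (pPI x y s * (∑ y', ∑ s', pPI x y' s')) * (∑ y', ∑ s', pPI x y' s')
        = ((∑ s', pPI x y s') * (∑ y', pPI x y' s)) * (∑ y', ∑ s', pPI x y' s') := by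
      linear_combination (∑ y', ∑ s', pPI x y' s') * h
    exact mul_right_cancel₀ hA h'
  -- key pointwise identity (multiplied-out form)
  have keyp : ∀ x y s,
      pE x y s * ((∑ y', ∑ s', pPI x y' s') * (∑ x', ∑ s', pPI x' y s'))
          * (∑ x', ∑ y', pPI x' y' s)
        = ((∑ x', pE x' y s) * (∑ y', pPI x y' s)) * (∑ s', pPI x y s') := by
    intro x y s
    have h1 := hm x y s
    have h2 := hc x y s
    have h3 := hind y s
    linear_combination (∑ y', ∑ s', pPI x y' s') * h1 + (∑ x', pE x' y s) * h2
      - pE x y s * (∑ y', ∑ s', pPI x y' s') * h3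
  -- the total mass identity: ∑∑ pE(x,y)·pPI(x)·pPI(y)/pPI(x,y) = 1
  have step1 : ∀ x y,
      (∑ s, pE x y s) * ((∑ y', ∑ s, pPI x y' s) * (∑ x', ∑ s, pPI x' y s))
          / (∑ s, pPI x y s)
        = ∑ s, (∑ x', pE x' y s) * (∑ y', pPI x y' s) / (∑ x', ∑ y', pPI x' y' s) := by
    intro x y
    rw [div_eq_iff (hPIxy x y).ne']
    calc (∑ s, pE x y s) * ((∑ y', ∑ s, pPI x y' s) * (∑ x', ∑ s, pPI x' y s))
        = ∑ s, pE x y s * ((∑ y', ∑ s', pPI x y' s') * (∑ x', ∑ s', pPI x' y s')) :=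
          Finset.sum_mul ..
      _ = ∑ s, ((∑ x', pE x' y s) * (∑ y', pPI x y' s) / (∑ x', ∑ y', pPI x' y' s))
            * (∑ s', pPI x y s') := by
          refine Finset.sum_congr rfl fun s _ => ?_
          rw [div_mul_eq_mul_div, eq_div_iff (hPIs s).ne']
          linear_combination keyp x y s
      _ = (∑ s, (∑ x', pE x' y s) * (∑ y', pPI x y' s) / (∑ x', ∑ y', pPI x' y' s))
            * (∑ s, pPI x y s) := (Finset.sum_mul ..).symm
  have hxsum : ∀ y s,
      ∑ x, (∑ x', pE x' y s) * (∑ y', pPI x y' s) / (∑ x', ∑ y', pPI x' y' s)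
        = ∑ x, pE x y s := by
    intro y s
    rw [← Finset.sum_div, ← Finset.mul_sum, mul_div_assoc, div_self (hPIs s).ne', mul_one]
  have Tsum : ∑ x, ∑ y,
      (∑ s, pE x y s) * ((∑ y', ∑ s, pPI x y' s) * (∑ x', ∑ s, pPI x' y s))
        / (∑ s, pPI x y s) = 1 := by
    calc ∑ x, ∑ y,
        (∑ s, pE x y s) * ((∑ y', ∑ s, pPI x y' s) * (∑ x', ∑ s, pPI x' y s))
          / (∑ s, pPI x y s)
        = ∑ x, ∑ y, ∑ s,
            (∑ x', pE x' y s) * (∑ y', pPI x y' s) / (∑ x', ∑ y', pPI x' y' s) := by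
          exact Finset.sum_congr rfl fun x _ => Finset.sum_congr rfl fun y _ => step1 x y
      _ = ∑ y, ∑ s, ∑ x,
            (∑ x', pE x' y s) * (∑ y', pPI x y' s) / (∑ x', ∑ y', pPI x' y' s) :=
          sum_rot_aux _
      _ = ∑ y, ∑ s, ∑ x, pE x y s := by
          exact Finset.sum_congr rfl fun y _ => Finset.sum_congr rfl fun s _ => hxsum y s
      _ = ∑ x, ∑ y, ∑ s, pE x y s := (sum_rot_aux _).symm
      _ = 1 := hEsum
  -- reduce to nonnegativity of the difference
  rw [neg_le_neg_iff]
  have hRHS : ∑ y, (∑ x, ∑ s, pE x y s) * Real.log (∑ x, ∑ s, pPI x y s)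
      = ∑ x, ∑ y, (∑ s, pE x y s) * Real.log (∑ x', ∑ s, pPI x' y s) := by
    calc ∑ y, (∑ x, ∑ s, pE x y s) * Real.log (∑ x, ∑ s, pPI x y s)
        = ∑ y, ∑ x, (∑ s, pE x y s) * Real.log (∑ x', ∑ s, pPI x' y s) := by
          exact Finset.sum_congr rfl fun y _ => by rw [Finset.sum_mul]
      _ = ∑ x, ∑ y, (∑ s, pE x y s) * Real.log (∑ x', ∑ s, pPI x' y s) :=
          Finset.sum_comm
  rw [hRHS, ← sub_nonneg, ← Finset.sum_sub_distrib]
  have hsum2 : ∑ x, ((∑ y, (∑ s, pE x y s) *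
        Real.log ((∑ s, pPI x y s) / (∑ y', ∑ s, pPI x y' s)))
      - ∑ y, (∑ s, pE x y s) * Real.log (∑ x', ∑ s, pPI x' y s))
      = ∑ x, ∑ y, ((∑ s, pE x y s) *
        Real.log ((∑ s, pPI x y s) / (∑ y', ∑ s, pPI x y' s))
      - (∑ s, pE x y s) * Real.log (∑ x', ∑ s, pPI x' y s)) :=
    Finset.sum_congr rfl fun x _ => (Finset.sum_sub_distrib ..).symm
  rw [hsum2]
  -- pointwise lower bound via log t ≥ 1 - 1/t
  have lower : ∀ x y,
      (∑ s, pE x y s)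
        - (∑ s, pE x y s) * ((∑ y', ∑ s, pPI x y' s) * (∑ x', ∑ s, pPI x' y s))
            / (∑ s, pPI x y s)
      ≤ (∑ s, pE x y s) * Real.log ((∑ s, pPI x y s) / (∑ y', ∑ s, pPI x y' s))
        - (∑ s, pE x y s) * Real.log (∑ x', ∑ s, pPI x' y s) := by
    intro x y
    have ha := hExy x y
    have hb := hPIxy x y
    have hcx := hPIx x
    have hd := hPIy y
    have hlog : Real.log ((∑ s, pPI x y s) / (∑ y', ∑ s, pPI x y' s))
        - Real.log (∑ x', ∑ s, pPI x' y s)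
        = Real.log ((∑ s, pPI x y s)
            / ((∑ y', ∑ s, pPI x y' s) * (∑ x', ∑ s, pPI x' y s))) := by
      rw [Real.log_div hb.ne' hcx.ne', Real.log_div hb.ne' (mul_pos hcx hd).ne',
        Real.log_mul hcx.ne' hd.ne']
      ring
    set t : ℝ := (∑ s, pPI x y s)
        / ((∑ y', ∑ s, pPI x y' s) * (∑ x', ∑ s, pPI x' y s)) with ht
    have htpos : 0 < t := div_pos hb (mul_pos hcx hd)
    have hlt : 1 - t⁻¹ ≤ Real.log t := by
      have h := Real.log_le_sub_one_of_pos (show (0:ℝ) < t⁻¹ by positivity)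
      rw [Real.log_inv] at h
      linarith
    have hmul : (∑ s, pE x y s) * (1 - t⁻¹) ≤ (∑ s, pE x y s) * Real.log t :=
      mul_le_mul_of_nonneg_left hlt ha.le
    have h1t : t⁻¹ = ((∑ y', ∑ s, pPI x y' s) * (∑ x', ∑ s, pPI x' y s))
        / (∑ s, pPI x y s) := by
      rw [ht, inv_div]
    calc (∑ s, pE x y s)
        - (∑ s, pE x y s) * ((∑ y', ∑ s, pPI x y' s) * (∑ x', ∑ s, pPI x' y s))
            / (∑ s, pPI x y s)
        = (∑ s, pE x y s) * (1 - t⁻¹) := by rw [h1t]; ring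
      _ ≤ (∑ s, pE x y s) * Real.log t := hmul
      _ = (∑ s, pE x y s) * Real.log ((∑ s, pPI x y s) / (∑ y', ∑ s, pPI x y' s))
        - (∑ s, pE x y s) * Real.log (∑ x', ∑ s, pPI x' y s) := by
          rw [← hlog]; ring
  calc (0:ℝ)
      = (∑ x, ∑ y, ∑ s, pE x y s)
        - ∑ x, ∑ y, (∑ s, pE x y s) * ((∑ y', ∑ s, pPI x y' s) * (∑ x', ∑ s, pPI x' y s))
            / (∑ s, pPI x y s) := by rw [hEsum, Tsum]; ring
    _ = ∑ x, ∑ y, ((∑ s, pE x y s)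
        - (∑ s, pE x y s) * ((∑ y', ∑ s, pPI x y' s) * (∑ x', ∑ s, pPI x' y s))
            / (∑ s, pPI x y s)) := by
          rw [← Finset.sum_sub_distrib]
          exact Finset.sum_congr rfl fun x _ => (Finset.sum_sub_distrib ..).symm
    _ ≤ ∑ x, ∑ y, ((∑ s, pE x y s) *
        Real.log ((∑ s, pPI x y s) / (∑ y', ∑ s, pPI x y' s))
      - (∑ s, pE x y s) * Real.log (∑ x', ∑ s, pPI x' y s)) :=
        Finset.sum_le_sum fun x _ => Finset.sum_le_sum fun y _ => lower x y
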